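/- Let g : ℝ² → ℂ be a Schwartz function. Writing ζ_j = (ξ_j, η_j) ∈ ℝ² for j = 1, …, 6 and setting ζ₆ := −(ζ₁ + ζ₂ + ζ₃ + ζ₄ + ζ₅), one has ∫_{(ℝ²)⁵} (ξ₄ + ξ₅ + ξ₆ + η₄ + η₅ + η₆) · g(ζ₁) g(ζ₂) g(ζ₃) g(ζ₄) g(ζ₅) g(ζ₆) dζ₁ dζ₂ dζ₃ dζ₄ dζ₅ = 0. -/

import Mathlib

open MeasureTheory

noncomputable section
abbrev X := ℝ × ℝ

/-- The shear-negate map on the split product. -/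
def Mequiv : X × (Fin 4 → X) ≃ᵐ X × (Fin 4 → X) where
  toEquiv :=
  { toFun := fun p => (-p.1 - ∑ j, p.2 j, p.2)
    invFun := fun p => (-p.1 - ∑ j, p.2 j, p.2)
    left_inv := fun p => by simp
    right_inv := fun p => by simp }
  measurable_toFun := by
    refine Measurable.prodMk ?_ measurable_snd
    exact (measurable_fst.neg.sub (Finset.measurable_sum _ fun j _ =>
      (measurable_pi_apply j).comp measurable_snd))
  measurable_invFun := by
    refine Measurable.prodMk ?_ measurable_snd
    exact (measurable_fst.neg.sub (Finset.measurable_sum _ fun j _ =>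
      (measurable_pi_apply j).comp measurable_snd))

lemma Mequiv_mp : MeasurePreserving (Mequiv : X × (Fin 4 → X) → X × (Fin 4 → X)) volume volume := by
  have hS : MeasurePreserving
      (fun q : (Fin 4 → X) × X => (q.1, -q.2 - ∑ j, q.1 j))
      ((volume : Measure (Fin 4 → X)).prod (volume : Measure X))
      ((volume : Measure (Fin 4 → X)).prod (volume : Measure X)) := by
    refine MeasurePreserving.skew_product (μa := (volume : Measure (Fin 4 → X))) (μb := volume)
        (μc := (volume : Measure X)) (μd := volume) (f := id) (g := fun y x => -x - ∑ j, y j)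
        (MeasurePreserving.id _) ?_ (Filter.Eventually.of_forall fun y => ?_)
    · exact (measurable_snd.neg.sub (Finset.measurable_sum _ fun j _ =>
        (measurable_pi_apply j).comp measurable_fst))
    · have h := (measurePreserving_add_right (volume : Measure X) (-(∑ j, y j))).comp
        (Measure.measurePreserving_neg (volume : Measure X))
      have h2 : MeasurePreserving (fun x : X => -x - ∑ j, y j) volume volume := by
        simpa [Function.comp_def, sub_eq_add_neg] using h
      exact h2.map_eq
  have hswap1 : MeasurePreserving (Prod.swap : X × (Fin 4 → X) → (Fin 4 → X) × X)
      ((volume : Measure X).prod volume) ((volume : Measure (Fin 4 → X)).prod volume) :=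
    Measure.measurePreserving_swap
  have hswap2 : MeasurePreserving (Prod.swap : (Fin 4 → X) × X → X × (Fin 4 → X))
      ((volume : Measure (Fin 4 → X)).prod volume) ((volume : Measure X).prod volume) :=
    Measure.measurePreserving_swap
  have := (hswap2.comp hS).comp hswap1
  rw [Measure.volume_eq_prod]
  convert this using 1
  · rfl
  · rfl
  · funext p; rfl

def eSplit : (Fin 5 → X) ≃ᵐ X × (Fin 4 → X) :=
  MeasurableEquiv.piFinSuccAbove (fun _ => X) 2

def sigma5 : Fin 5 ≃ Fin 5 := (Equiv.swap 0 3).trans (Equiv.swap 1 4)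

def Pme : (Fin 5 → X) ≃ᵐ (Fin 5 → X) :=
  (MeasurableEquiv.piCongrLeft (fun _ => X) sigma5).symm

def Vequiv : (Fin 5 → X) ≃ᵐ (Fin 5 → X) :=
  ((eSplit.trans Mequiv).trans eSplit.symm).trans Pme

lemma Vequiv_mp : MeasurePreserving (Vequiv : (Fin 5 → X) → Fin 5 → X) volume volume := by
  have h1 : MeasurePreserving (eSplit : (Fin 5 → X) → X × (Fin 4 → X)) volume volume :=
    volume_preserving_piFinSuccAbove (fun _ => X) 2
  have h2 := h1.symm eSplit
  have h3 : MeasurePreserving (Pme : (Fin 5 → X) → Fin 5 → X) volume volume :=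
    (volume_measurePreserving_piCongrLeft (fun _ => X) sigma5).symm _
  exact ((h3.comp h2).comp Mequiv_mp).comp h1

lemma Pme_apply (w : Fin 5 → X) (i : Fin 5) : Pme w i = w (sigma5 i) := by
  simp [Pme, MeasurableEquiv.piCongrLeft, Equiv.piCongrLeft]

lemma eSplit_symm_apply (x : X) (y : Fin 4 → X) :
    eSplit.symm (x, y) = Fin.insertNth 2 x y := rfl

lemma eSplit_apply (z : Fin 5 → X) :
    eSplit z = (z 2, fun j => z ((2 : Fin 5).succAbove j)) := rfl

lemma Vequiv_apply (z : Fin 5 → X) (i : Fin 5) :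
    Vequiv z i = Fin.insertNth (α := fun _ : Fin 5 => X) 2 (-(∑ k, z k)) (fun j => z ((2 : Fin 5).succAbove j)) (sigma5 i) := by
  have hsum : -(z 2) - ∑ j : Fin 4, z ((2 : Fin 5).succAbove j) = -(∑ k, z k) := by
    rw [Fin.sum_univ_succAbove z 2]; abel
  simp only [Vequiv, MeasurableEquiv.trans_apply, Pme_apply, eSplit_apply]
  rw [show (Mequiv (z 2, fun j => z ((2:Fin 5).succAbove j))) =
      (-(∑ k, z k), fun j => z ((2:Fin 5).succAbove j)) from by
    simp [Mequiv, ← hsum]]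
  rfl

lemma V0 (z : Fin 5 → X) : Vequiv z 0 = z 3 := by
  rw [Vequiv_apply]
  have : sigma5 0 = (2:Fin 5).succAbove 2 := by decide
  rw [this, Fin.insertNth_apply_succAbove]
  exact congrArg z (by decide)
lemma V1 (z : Fin 5 → X) : Vequiv z 1 = z 4 := by
  rw [Vequiv_apply]
  have : sigma5 1 = (2:Fin 5).succAbove 3 := by decide
  rw [this, Fin.insertNth_apply_succAbove]
  exact congrArg z (by decide)
lemma V2 (z : Fin 5 → X) : Vequiv z 2 = -(∑ k, z k) := by
  rw [Vequiv_apply]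
  have : sigma5 2 = (2:Fin 5) := by decide
  rw [this, Fin.insertNth_apply_same]
lemma V3 (z : Fin 5 → X) : Vequiv z 3 = z 0 := by
  rw [Vequiv_apply]
  have : sigma5 3 = (2:Fin 5).succAbove 0 := by decide
  rw [this, Fin.insertNth_apply_succAbove]
  exact congrArg z (by decide)
lemma V4 (z : Fin 5 → X) : Vequiv z 4 = z 1 := by
  rw [Vequiv_apply]
  have : sigma5 4 = (2:Fin 5).succAbove 1 := by decide
  rw [this, Fin.insertNth_apply_succAbove]
  exact congrArg z (by decide)

lemma Vsum (z : Fin 5 → X) : ∑ i, Vequiv z i = -(z 2) := by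
  rw [Fin.sum_univ_five, V0, V1, V2, V3, V4, Fin.sum_univ_five]
  abel


/-- the symmetry cancellation for the six-linear term in the almost
conservation law: with `ζ₆ := −(ζ₁+⋯+ζ₅)`, the integral over `(ℝ²)⁵` of
`(ξ₄+ξ₅+ξ₆+η₄+η₅+η₆) g(ζ₁)⋯g(ζ₆)` vanishes for every Schwartz `g`. -/
theorem six_linear_symmetry_cancellation (g : SchwartzMap (ℝ × ℝ) ℂ) :
    (∫ z : Fin 5 → ℝ × ℝ,
      ((((z 3).1 + (z 4).1 + (-(∑ i, z i)).1
          + (z 3).2 + (z 4).2 + (-(∑ i, z i)).2 : ℝ)) : ℂ)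
        * ((∏ j : Fin 5, g (z j)) * g (-(∑ i, z i)))) = 0 := by
  set f : (Fin 5 → ℝ × ℝ) → ℂ := fun z =>
    ((((z 3).1 + (z 4).1 + (-(∑ i, z i)).1
        + (z 3).2 + (z 4).2 + (-(∑ i, z i)).2 : ℝ)) : ℂ)
      * ((∏ j : Fin 5, g (z j)) * g (-(∑ i, z i))) with hfdef
  have hpt : ∀ z : Fin 5 → ℝ × ℝ, f (Vequiv z) = -f z := by
    intro z
    have h0 := V0 z; have h1 := V1 z; have h2 := V2 z
    have h3 := V3 z; have h4 := V4 z; have hs := Vsum z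
    have hfst : (-(∑ i, z i)).1
        = -((z 0).1 + (z 1).1 + (z 2).1 + (z 3).1 + (z 4).1) := by
      rw [Prod.fst_neg, Prod.fst_sum, Fin.sum_univ_five]
    have hsnd : (-(∑ i, z i)).2
        = -((z 0).2 + (z 1).2 + (z 2).2 + (z 3).2 + (z 4).2) := by
      rw [Prod.snd_neg, Prod.snd_sum, Fin.sum_univ_five]
    simp only [hfdef, Fin.prod_univ_five, hs, h0, h1, h2, h3, h4, neg_neg]
    rw [hfst, hsnd]
    push_cast
    ring
  have hint : (∫ z, f z) = ∫ z, f (Vequiv z) := (Vequiv_mp.integral_comp' f).symm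
  have hneg : (∫ z, f (Vequiv z)) = -∫ z, f z := by
    simp_rw [hpt]
    exact integral_neg f
  have h : (∫ z, f z) = -∫ z, f z := hint.trans hneg
  linear_combination h / 2
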